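/- Let R be a noncommutative Lie ring such that there exists a nonzero element z ∈ Z(R) ∩ [R, R] and an element a ∉ [R, R]. Then the map α : R → R defined by α(a) = a + z, α(a + z) = a, and α(x) = x otherwise, is a commutator-preserving bijection. If moreover |R| > 4, then α is not additive, so R is not a UA-Lie ring. -/

import Mathlib

theorem stmt_6 (R : Type*) [LieRing R]
    (hnc : ∃ x y : R, ⁅x, y⁆ ≠ 0)
    (z : R) (hz : z ≠ 0) (hzZ : ∀ y : R, ⁅z, y⁆ = 0)
    (hzD : z ∈ AddSubgroup.closure {x : R | ∃ u v : R, ⁅u, v⁆ = x})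
    (a : R) (haD : a ∉ AddSubgroup.closure {x : R | ∃ u v : R, ⁅u, v⁆ = x})
    (α : R → R)
    (hαa : α a = a + z) (hαaz : α (a + z) = a)
    (hαx : ∀ x : R, x ≠ a → x ≠ a + z → α x = x) :
    Function.Bijective α ∧ (∀ x y : R, α ⁅x, y⁆ = ⁅α x, α y⁆) ∧
      (4 < Cardinal.mk R → ¬ (∀ x y : R, α (x + y) = α x + α y)) := by
  have hane : a + z ≠ a := fun h => hz (add_eq_left.mp h)
  -- involutivity
  have hinv : Function.Involutive α := by
    intro x
    by_cases h1 : x = a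
    · rw [h1, hαa, hαaz]
    · by_cases h2 : x = a + z
      · rw [h2, hαaz, hαa]
      · rw [hαx x h1 h2, hαx x h1 h2]
  -- bracket invariance on the left and right
  have hL : ∀ x y : R, ⁅α x, y⁆ = ⁅x, y⁆ := by
    intro x y
    by_cases h1 : x = a
    · rw [h1, hαa, add_lie, hzZ, add_zero]
    · by_cases h2 : x = a + z
      · rw [h2, hαaz, add_lie, hzZ, add_zero]
      · rw [hαx x h1 h2]
  have hR : ∀ x y : R, ⁅x, α y⁆ = ⁅x, y⁆ := by
    intro x y
    rw [← lie_skew, hL, lie_skew]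
  have hazD : a + z ∉ AddSubgroup.closure {x : R | ∃ u v : R, ⁅u, v⁆ = x} := by
    intro h
    exact haD (by simpa using AddSubgroup.sub_mem _ h hzD)
  refine ⟨hinv.bijective, ?_, ?_⟩
  · intro x y
    have hmem : ⁅x, y⁆ ∈ AddSubgroup.closure {x : R | ∃ u v : R, ⁅u, v⁆ = x} :=
      AddSubgroup.subset_closure ⟨x, y, rfl⟩
    have h1 : ⁅x, y⁆ ≠ a := fun h => haD (h ▸ hmem)
    have h2 : ⁅x, y⁆ ≠ a + z := fun h => hazD (h ▸ hmem)
    rw [hαx _ h1 h2, hL, hR]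
  · intro hcard hadd
    -- every element is in {0, z, a, a+z}
    have hall : ∀ b : R, b = 0 ∨ b = z ∨ b = a ∨ b = a + z := by
      intro b
      by_contra hb
      push_neg at hb
      obtain ⟨hb0, hbz, hba, hbaz⟩ := hb
      have h1 : a + b ≠ a := fun h => hb0 (add_eq_left.mp h)
      have h2 : a + b ≠ a + z := fun h => hbz (add_left_cancel h)
      have := hadd a b
      rw [hαx _ h1 h2, hαa, hαx b hba hbaz] at this
      exact hane (add_right_cancel this).symm
    have hsub : (Set.univ : Set R) ⊆ {0, z, a, a + z} := by
      intro b _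
      rcases hall b with h | h | h | h <;> simp [h]
    have : Cardinal.mk R ≤ 4 := by
      calc Cardinal.mk R = Cardinal.mk (Set.univ : Set R) := Cardinal.mk_univ.symm
        _ ≤ Cardinal.mk ({0, z, a, a + z} : Set R) := Cardinal.mk_le_mk_of_subset hsub
        _ ≤ 4 := by
          refine le_trans (Cardinal.mk_insert_le) ?_
          refine le_trans (add_le_add_left Cardinal.mk_insert_le 1) ?_
          refine le_trans (add_le_add_left (add_le_add_left Cardinal.mk_insert_le 1) 1) ?_
          simp [Cardinal.mk_singleton]
          norm_num
    exact absurd hcard (not_lt.mpr this)
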